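/- The determinant of the matrix Φ equals 1 (so that Φ, being Hermitian with Φ * η * Φ = η and det Φ = 1, lies in SU(2,1)). -/

import Mathlib

open Complex ComplexConjugate Matrix

/-- The `SU(2,1)` metric `η = diag(-1, 1, 1)`. -/
noncomputable def etaM : Matrix (Fin 3) (Fin 3) ℂ :=
  Matrix.diagonal ![-1, 1, 1]

/-- The vector `v` built from the Ernst potential `ℰ = -X - Λ conj(Λ) + i Y`
and the electromagnetic potential `Λ`:
`v = (2√X)⁻¹ (ℰ - 1, 2Λ, ℰ + 1)`. -/
noncomputable def vE (X Y : ℝ) (Λ : ℂ) : Fin 3 → ℂ :=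
  let ℰ : ℂ := -(X : ℂ) - Λ * conj Λ + Complex.I * Y
  ![(ℰ - 1) / (2 * Real.sqrt X), Λ / Real.sqrt X, (ℰ + 1) / (2 * Real.sqrt X)]

/-- The hermitian matrix `Φ` of the Mazur construction:
`Φ_{ab} = η_{ab} + 2 conj(v_a) v_b`. -/
noncomputable def PhiM (X Y : ℝ) (Λ : ℂ) : Matrix (Fin 3) (Fin 3) ℂ :=
  Matrix.of fun a b => etaM a b + 2 * conj (vE X Y Λ a) * vE X Y Λ b

set_option maxHeartbeats 1000000 in
/-- The determinant of `Φ` equals `1` (so `Φ`, being Hermitian with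
`Φ η Φ = η` and `det Φ = 1`, lies in `SU(2,1)`). -/
theorem PhiM_det_one (X Y : ℝ) (hX : 0 < X) (Λ : ℂ) :
    (PhiM X Y Λ).det = 1 := by
  have hs : (Real.sqrt X : ℂ) ^ 2 = (X : ℂ) := by
    rw [← Complex.ofReal_pow, Real.sq_sqrt hX.le]
  have hs0 : (Real.sqrt X : ℂ) ≠ 0 := by
    simp [Real.sqrt_eq_zero', hX, not_le.mpr hX]
  set s : ℂ := (Real.sqrt X : ℂ) with hsdef
  rw [Matrix.det_fin_three]
  simp only [PhiM, vE, etaM, Matrix.of_apply, Matrix.diagonal, Matrix.cons_val',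
    Matrix.cons_val_zero, Matrix.cons_val_one, Matrix.head_cons, Matrix.head_fin_const,
    Matrix.cons_val_fin_one, Matrix.empty_val', Matrix.cons_val_two, Matrix.tail_cons,
    Fin.isValue, ne_eq, map_div₀, _root_.map_mul, map_add, map_sub, map_neg, _root_.map_one, map_ofNat,
    Complex.conj_conj, Complex.conj_ofReal, Complex.conj_I, Fin.reduceEq, reduceIte]
  rw [← hs] at *
  field_simp
  ring_nf

  rw [← mul_pow, mul_inv_cancel₀ hs0, one_pow]
  norm_num
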